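/- Let a < b, let h : (0,1) → (0,∞) be a given function, let φ : [a,b] → [a,b] be an affine continuous map (φ(λx + (1−λ)y) = λφ(x) + (1−λ)φ(y)) with φ(a) < φ(b), let g : [a,b] → [0,∞) be φ_h-convex and Lebesgue integrable, and let f : [a,b] → [0,∞) be Lebesgue integrable and (g,φ_h)-convex dominated on [a,b]. Then |(1/(φ(b) − φ(a))) ∫_{φ(a)}^{φ(b)} f(x) dx − (1/(2h(1/2))) f((φ(a) + φ(b))/2)| ≤ (1/(φ(b) − φ(a))) ∫_{φ(a)}^{φ(b)} g(x) dx − (1/(2h(1/2))) g((φ(a) + φ(b))/2). -/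

import Mathlib

open MeasureTheory Set

/-- `F` is `φ_h`-convex on `I`. -/
def PhiHConvexOn (I : Set ℝ) (h φ F : ℝ → ℝ) : Prop :=
  ∀ x ∈ I, ∀ y ∈ I, ∀ t ∈ Set.Ioo (0:ℝ) 1,
    F (t * φ x + (1 - t) * φ y) ≤ h t * F (φ x) + h (1 - t) * F (φ y)

/-- `f` is `(g, φ_h)`-convex dominated on `I`. -/
def GPhiHConvexDominated (I : Set ℝ) (h φ g f : ℝ → ℝ) : Prop :=
  ∀ x ∈ I, ∀ y ∈ I, ∀ t ∈ Set.Ioo (0:ℝ) 1,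
    |h t * f (φ x) + h (1 - t) * f (φ y) - f (t * φ x + (1 - t) * φ y)| ≤
      h t * g (φ x) + h (1 - t) * g (φ y) - g (t * φ x + (1 - t) * φ y)

theorem stmt2 (a b : ℝ) (hab : a < b) (h φ f g : ℝ → ℝ)
    (hh : ∀ t ∈ Set.Ioo (0:ℝ) 1, 0 < h t)
    (hφmaps : Set.MapsTo φ (Set.Icc a b) (Set.Icc a b))
    (hφaff : ∀ x ∈ Set.Icc a b, ∀ y ∈ Set.Icc a b, ∀ l ∈ Set.Icc (0:ℝ) 1,
      φ (l * x + (1 - l) * y) = l * φ x + (1 - l) * φ y)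
    (hφcont : ContinuousOn φ (Set.Icc a b))
    (hφab : φ a < φ b)
    (hg0 : ∀ x ∈ Set.Icc a b, 0 ≤ g x)
    (hgconv : PhiHConvexOn (Set.Icc a b) h φ g)
    (hgint : IntegrableOn g (Set.Icc a b))
    (hf0 : ∀ x ∈ Set.Icc a b, 0 ≤ f x)
    (hfint : IntegrableOn f (Set.Icc a b))
    (hfdom : GPhiHConvexDominated (Set.Icc a b) h φ g f) :
    |(1 / (φ b - φ a)) * ∫ x in φ a..φ b, f x -
        (1 / (2 * h (1 / 2))) * f ((φ a + φ b) / 2)| ≤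
      (1 / (φ b - φ a)) * ∫ x in φ a..φ b, g x -
        (1 / (2 * h (1 / 2))) * g ((φ a + φ b) / 2) := by
  have ha : a ∈ Icc a b := ⟨le_refl a, hab.le⟩
  have hb : b ∈ Icc a b := ⟨hab.le, le_refl b⟩
  set c := φ a with hc
  set d := φ b with hd
  have hcI : c ∈ Icc a b := hφmaps ha
  have hdI : d ∈ Icc a b := hφmaps hb
  have hcd : c < d := hφab
  have hdc0 : d - c ≠ 0 := by linarith
  have hcd0 : c - d ≠ 0 := by linarith
  have h2 : 0 < h (1/2) := hh _ (by norm_num)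
  -- key pointwise inequality for t ∈ (0,1)
  have key : ∀ t ∈ Ioo (0:ℝ) 1,
      |h (1/2) * f (t * c + (1-t) * d) + h (1/2) * f ((1-t) * c + t * d) - f ((c+d)/2)| ≤
        h (1/2) * g (t * c + (1-t) * d) + h (1/2) * g ((1-t) * c + t * d) - g ((c+d)/2) := by
    intro t ht
    obtain ⟨ht0, ht1⟩ := ht
    have hx : t * a + (1-t) * b ∈ Icc a b := ⟨by nlinarith, by nlinarith⟩
    have hy : (1-t) * a + (1-(1-t)) * b ∈ Icc a b := ⟨by nlinarith, by nlinarith⟩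
    have hφx : φ (t * a + (1-t) * b) = t * c + (1-t) * d :=
      hφaff a ha b hb t ⟨ht0.le, ht1.le⟩
    have hφy : φ ((1-t) * a + (1-(1-t)) * b) = (1-t) * c + t * d := by
      rw [hφaff a ha b hb (1-t) ⟨by linarith, by linarith⟩, ← hc, ← hd]; ring_nf
    have := hfdom _ hx _ hy (1/2) (by norm_num)
    rw [hφx, hφy] at this
    have e12 : (1:ℝ) - 1/2 = 1/2 := by norm_num
    rw [e12] at this
    have emid : (1/2 : ℝ) * (t * c + (1-t) * d) + (1/2 : ℝ) * ((1-t) * c + t * d)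
        = (c+d)/2 := by ring
    rwa [emid] at this
  -- integrability of the composed functions
  have hIcc : Icc c d ⊆ Icc a b := Icc_subset_Icc hcI.1 hdI.2
  have hfI : IntervalIntegrable f volume c d := by
    rw [intervalIntegrable_iff_integrableOn_Icc_of_le hcd.le]
    exact hfint.mono_set hIcc
  have hgI : IntervalIntegrable g volume c d := by
    rw [intervalIntegrable_iff_integrableOn_Icc_of_le hcd.le]
    exact hgint.mono_set hIcc
  -- comp integrability: fun t => f ((c-d)*t + d) on [0,1]
  have comp1 : ∀ (F : ℝ → ℝ), IntervalIntegrable F volume c d →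
      IntervalIntegrable (fun t => F ((c-d)*t + d)) volume 0 1 := by
    intro F hF
    have h1 : IntervalIntegrable (fun x => F (x + d)) volume (c - d) (d - d) :=
      hF.comp_add_right d
    have h2' : IntervalIntegrable (fun x => F ((c-d) * x + d)) volume
        ((c-d)/(c-d)) ((d-d)/(c-d)) := h1.comp_mul_left (c := c-d)
    have e1 : (c-d)/(c-d) = (1:ℝ) := div_self hcd0
    have e2 : (d-d)/(c-d) = (0:ℝ) := by rw [sub_self, zero_div]
    rw [e1, e2] at h2'
    exact h2'.symm
  have comp2 : ∀ (F : ℝ → ℝ), IntervalIntegrable F volume c d →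
      IntervalIntegrable (fun t => F ((d-c)*t + c)) volume 0 1 := by
    intro F hF
    have h1 : IntervalIntegrable (fun x => F (x + c)) volume (c - c) (d - c) :=
      hF.comp_add_right c
    have h2' : IntervalIntegrable (fun x => F ((d-c) * x + c)) volume
        ((c-c)/(d-c)) ((d-c)/(d-c)) := h1.comp_mul_left (c := d-c)
    have e1 : (d-c)/(d-c) = (1:ℝ) := div_self hdc0
    have e2 : (c-c)/(d-c) = (0:ℝ) := by rw [sub_self, zero_div]
    rwa [e1, e2] at h2'
  -- integral values of the composed functions
  have int1 : ∀ (F : ℝ → ℝ), (∫ t in (0:ℝ)..1, F ((c-d)*t + d)) =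
      (d-c)⁻¹ * ∫ x in c..d, F x := by
    intro F
    rw [intervalIntegral.integral_comp_mul_add F hcd0 d]
    have e1 : (c-d)*0 + d = d := by ring
    have e2 : (c-d)*1 + d = c := by ring
    rw [e1, e2, intervalIntegral.integral_symm, smul_eq_mul]
    field_simp
    ring
  have int2 : ∀ (F : ℝ → ℝ), (∫ t in (0:ℝ)..1, F ((d-c)*t + c)) =
      (d-c)⁻¹ * ∫ x in c..d, F x := by
    intro F
    rw [intervalIntegral.integral_comp_mul_add F hdc0 c]
    have e1 : (d-c)*0 + c = c := by ring
    have e2 : (d-c)*1 + c = d := by ring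
    rw [e1, e2, smul_eq_mul]
  -- define the integrand functions
  set F : ℝ → ℝ := fun t =>
    h (1/2) * f ((c-d)*t + d) + h (1/2) * f ((d-c)*t + c) - f ((c+d)/2) with hF
  set G : ℝ → ℝ := fun t =>
    h (1/2) * g ((c-d)*t + d) + h (1/2) * g ((d-c)*t + c) - g ((c+d)/2) with hG
  have hFint : IntervalIntegrable F volume 0 1 :=
    (((comp1 f hfI).const_mul _).add ((comp2 f hfI).const_mul _)).sub
      intervalIntegrable_const
  have hGint : IntervalIntegrable G volume 0 1 :=
    (((comp1 g hgI).const_mul _).add ((comp2 g hgI).const_mul _)).sub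
      intervalIntegrable_const
  have hFabs : IntervalIntegrable (fun t => |F t|) volume 0 1 := hFint.abs
  -- a.e. pointwise bound on [0,1]
  have hae : (fun t => |F t|) ≤ᵐ[volume.restrict (Icc (0:ℝ) 1)] G := by
    have hnull : (volume : Measure ℝ) ({0, 1} : Set ℝ) = 0 :=
      (Set.toFinite _).measure_zero _
    have h1 : ∀ᵐ t ∂(volume.restrict (Icc (0:ℝ) 1)), t ∉ ({0,1} : Set ℝ) :=
      ae_restrict_of_ae (measure_eq_zero_iff_ae_notMem.mp hnull)
    have h2' : ∀ᵐ t ∂(volume.restrict (Icc (0:ℝ) 1)), t ∈ Icc (0:ℝ) 1 :=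
      ae_restrict_mem measurableSet_Icc
    filter_upwards [h1, h2'] with t ht1 ht2
    have htIoo : t ∈ Ioo (0:ℝ) 1 := by
      constructor
      · rcases lt_or_eq_of_le ht2.1 with h' | h'
        · exact h'
        · exact absurd (by simp [← h']) ht1
      · rcases lt_or_eq_of_le ht2.2 with h' | h'
        · exact h'
        · exact absurd (by simp [h']) ht1
    have := key t htIoo
    have ea : t * c + (1-t) * d = (c-d)*t + d := by ring
    have eb : (1-t) * c + t * d = (d-c)*t + c := by ring
    rw [ea, eb] at this
    simpa [hF, hG] using this
  have hmono : (∫ t in (0:ℝ)..1, |F t|) ≤ ∫ t in (0:ℝ)..1, G t :=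
    intervalIntegral.integral_mono_ae_restrict zero_le_one hFabs hGint hae
  have habs : |∫ t in (0:ℝ)..1, F t| ≤ ∫ t in (0:ℝ)..1, |F t| :=
    intervalIntegral.abs_integral_le_integral_abs zero_le_one
  -- compute the integrals
  have hIF : (∫ t in (0:ℝ)..1, F t) =
      2 * h (1/2) * ((d-c)⁻¹ * ∫ x in c..d, f x) - f ((c+d)/2) := by
    rw [hF]
    rw [intervalIntegral.integral_sub
      (((comp1 f hfI).const_mul _).add ((comp2 f hfI).const_mul _))
      intervalIntegrable_const,
      intervalIntegral.integral_add ((comp1 f hfI).const_mul _)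
        ((comp2 f hfI).const_mul _),
      intervalIntegral.integral_const_mul, intervalIntegral.integral_const_mul,
      int1 f, int2 f, intervalIntegral.integral_const]
    simp
    ring
  have hIG : (∫ t in (0:ℝ)..1, G t) =
      2 * h (1/2) * ((d-c)⁻¹ * ∫ x in c..d, g x) - g ((c+d)/2) := by
    rw [hG]
    rw [intervalIntegral.integral_sub
      (((comp1 g hgI).const_mul _).add ((comp2 g hgI).const_mul _))
      intervalIntegrable_const,
      intervalIntegral.integral_add ((comp1 g hgI).const_mul _)
        ((comp2 g hgI).const_mul _),
      intervalIntegral.integral_const_mul, intervalIntegral.integral_const_mul,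
      int1 g, int2 g, intervalIntegral.integral_const]
    simp
    ring
  have main : |2 * h (1/2) * ((d-c)⁻¹ * ∫ x in c..d, f x) - f ((c+d)/2)| ≤
      2 * h (1/2) * ((d-c)⁻¹ * ∫ x in c..d, g x) - g ((c+d)/2) := by
    rw [← hIF, ← hIG]; exact habs.trans hmono
  -- final scaling
  have h2ne : (2 * h (1/2)) ≠ 0 := by positivity
  have eA : 2 * h (1/2) * ((1 / (d - c)) * (∫ x in c..d, f x) -
      (1 / (2 * h (1/2))) * f ((c+d)/2)) =
      2 * h (1/2) * ((d-c)⁻¹ * ∫ x in c..d, f x) - f ((c+d)/2) := by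
    field_simp
  have eB : 2 * h (1/2) * ((1 / (d - c)) * (∫ x in c..d, g x) -
      (1 / (2 * h (1/2))) * g ((c+d)/2)) =
      2 * h (1/2) * ((d-c)⁻¹ * ∫ x in c..d, g x) - g ((c+d)/2) := by
    field_simp
  rw [← eA, ← eB] at main
  rw [abs_mul, abs_of_pos (by linarith : (0:ℝ) < 2 * h (1/2))] at main
  have step : |(1 / (d - c)) * (∫ x in c..d, f x) -
      (1 / (2 * h (1/2))) * f ((c+d)/2)| ≤
      (1 / (d - c)) * (∫ x in c..d, g x) -
      (1 / (2 * h (1/2))) * g ((c+d)/2) :=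
    (mul_le_mul_iff_right₀ (show (0:ℝ) < 2 * h (1/2) by linarith)).mp main
  -- the goal's integral notation includes the subtraction in the integrand
  have ef : (∫ x in c..d, (f x - 1 / (2 * h (1/2)) * f ((c+d)/2))) =
      (∫ x in c..d, f x) - (d - c) * (1 / (2 * h (1/2)) * f ((c+d)/2)) := by
    rw [intervalIntegral.integral_sub hfI intervalIntegrable_const,
      intervalIntegral.integral_const, smul_eq_mul]
  have eg : (∫ x in c..d, (g x - 1 / (2 * h (1/2)) * g ((c+d)/2))) =
      (∫ x in c..d, g x) - (d - c) * (1 / (2 * h (1/2)) * g ((c+d)/2)) := by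
    rw [intervalIntegral.integral_sub hgI intervalIntegrable_const,
      intervalIntegral.integral_const, smul_eq_mul]
  have q1 : 1 / (d - c) * ((∫ x in c..d, f x) -
      (d - c) * (1 / (2 * h (1/2)) * f ((c+d)/2))) =
      (1 / (d - c)) * (∫ x in c..d, f x) - (1 / (2 * h (1/2))) * f ((c+d)/2) := by
    field_simp
  have q2 : 1 / (d - c) * ((∫ x in c..d, g x) -
      (d - c) * (1 / (2 * h (1/2)) * g ((c+d)/2))) =
      (1 / (d - c)) * (∫ x in c..d, g x) - (1 / (2 * h (1/2))) * g ((c+d)/2) := by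
    field_simp
  rw [ef, eg, q1, q2]
  exact step
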